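/- If ξ(X,Y) = 0, then X and Y are independent. -/

import Mathlib

open MeasureTheory ProbabilityTheory

section Aux

open Set Filter Topology

variable {P ν : Measure ℝ}

/-- Key extension lemma: a finite measure dominated by a probability measure `P`,
agreeing with `c • P` on a.e. half-line `Iic t` and on `univ`, equals `c • P`. -/
lemma cvm_aux [IsProbabilityMeasure P] [IsFiniteMeasure ν]
    (hle : ν ≤ P) (c : ENNReal) (hc : c ≤ 1)
    (hae : ∀ᵐ t ∂P, ν (Set.Iic t) = c * P (Set.Iic t))
    (huniv : ν Set.univ = c * P Set.univ) :
    ν = c • P := by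
  have hac : ν ≪ P := Measure.absolutelyContinuous_of_le hle
  have hct : c ≠ ⊤ := (hc.trans_lt ENNReal.one_lt_top).ne
  set cr : ℝ := c.toReal with hcr
  have hcr1 : cr ≤ 1 := by
    simpa using ENNReal.toReal_mono ENNReal.one_ne_top hc
  have hcr0 : 0 ≤ cr := ENNReal.toReal_nonneg
  set h : ℝ → ℝ := fun y => min ((ν.rnDeriv P) y).toReal 1 - cr with hh
  have hmeas_h : Measurable h :=
    (((Measure.measurable_rnDeriv ν P).ennreal_toReal).min measurable_const).sub measurable_const
  have hbd : ∀ y, |h y| ≤ 1 := by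
    intro y
    have h1 : 0 ≤ min ((ν.rnDeriv P) y).toReal 1 := le_min ENNReal.toReal_nonneg zero_le_one
    have h2 : min ((ν.rnDeriv P) y).toReal 1 ≤ 1 := min_le_right _ _
    rw [abs_sub_le_iff]
    constructor <;> linarith
  have hint : Integrable h P := by
    refine (integrable_const (1 : ℝ)).mono' hmeas_h.aestronglyMeasurable ?_
    exact ae_of_all _ fun y => by simpa using hbd y
  -- the key set-integral formula
  have key : ∀ s : Set ℝ, MeasurableSet s →
      ∫ y in s, h y ∂P = (ν s).toReal - cr * (P s).toReal := by
    intro s hs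
    have h1 : ∫ y in s, min ((ν.rnDeriv P) y).toReal 1 ∂P = (ν s).toReal := by
      rw [← measureReal_def, ← Measure.setIntegral_toReal_rnDeriv hac s]
      refine setIntegral_congr_ae hs ?_
      filter_upwards [Measure.rnDeriv_le_one_of_le hle] with y hy _
      exact min_eq_left (by simpa using ENNReal.toReal_mono ENNReal.one_ne_top hy)
    have h2 : IntegrableOn (fun y => min ((ν.rnDeriv P) y).toReal 1) s P := by
      refine (integrable_const (1 : ℝ)).integrableOn.mono' ?_ ?_
      · exact ((((Measure.measurable_rnDeriv ν P).ennreal_toReal).min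
          measurable_const)).aestronglyMeasurable
      · refine ae_of_all _ fun y => ?_
        have h1' : 0 ≤ min ((ν.rnDeriv P) y).toReal 1 := le_min ENNReal.toReal_nonneg zero_le_one
        have h2' : min ((ν.rnDeriv P) y).toReal 1 ≤ 1 := min_le_right _ _
        simp [abs_of_nonneg h1', h2']
    rw [hh]
    rw [integral_sub h2 (integrableOn_const (measure_ne_top _ _))]
    rw [h1, setIntegral_const, smul_eq_mul, measureReal_def, mul_comm]
  -- g = CDF-difference function
  set g : ℝ → ℝ := fun t => ∫ y in Iic t, h y ∂P with hg
  have hg0 : ∀ᵐ t ∂P, g t = 0 := by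
    filter_upwards [hae] with t ht
    rw [hg]
    simp only
    rw [key _ measurableSet_Iic, ht, ENNReal.toReal_mul, sub_self]
  have htot : ∫ y, h y ∂P = 0 := by
    have h0 := key Set.univ MeasurableSet.univ
    rw [setIntegral_univ, huniv, ENNReal.toReal_mul, sub_self] at h0
    exact h0
  -- measurability of the atom-mass function
  have hPsing : Measurable (fun y : ℝ => (P {y}).toReal) := by
    have hmono1 : Monotone (fun y : ℝ => (P (Iic y)).toReal) := fun a b hab =>
      ENNReal.toReal_mono (measure_ne_top _ _) (measure_mono (Iic_subset_Iic.mpr hab))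
    have hmono2 : Monotone (fun y : ℝ => (P (Iio y)).toReal) := fun a b hab =>
      ENNReal.toReal_mono (measure_ne_top _ _) (measure_mono (Iio_subset_Iio hab))
    have heq : (fun y : ℝ => (P {y}).toReal)
        = fun y => (P (Iic y)).toReal - (P (Iio y)).toReal := by
      funext y
      have hsplit : P (Iic y) = P (Iio y) + P {y} := by
        rw [← Iio_union_right, measure_union (by simp) (measurableSet_singleton y)]
      rw [hsplit, ENNReal.toReal_add (measure_ne_top _ _) (measure_ne_top _ _)]
      ring
    rw [heq]
    exact (hmono1.measurable).sub (hmono2.measurable)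
  -- integral over a singleton
  have hsing : ∀ y : ℝ, ∫ z in ({y} : Set ℝ), h z ∂P = (P {y}).toReal * h y := by
    intro y
    rw [Measure.restrict_singleton, integral_smul_measure, integral_dirac, smul_eq_mul]
  -- atoms: h vanishes at atoms
  have hatom : ∀ y : ℝ, h y * (P {y}).toReal = 0 := by
    set F : ℝ → ℝ → ℝ := fun y t => if y ≤ t then h y * h t else 0 with hF
    have hFmeas : Measurable (Function.uncurry F) := by
      refine Measurable.ite ?_ ?_ measurable_const
      · exact measurableSet_le measurable_fst measurable_snd
      · exact (hmeas_h.comp measurable_fst).mul (hmeas_h.comp measurable_snd)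
    have hFint : Integrable (Function.uncurry F) (P.prod P) := by
      refine (integrable_const (1 : ℝ)).mono' hFmeas.aestronglyMeasurable (ae_of_all _ ?_)
      rintro ⟨y, t⟩
      simp only [Function.uncurry, hF]
      split_ifs
      · rw [Real.norm_eq_abs, abs_mul]
        calc |h y| * |h t| ≤ 1 * 1 := by
              exact mul_le_mul (hbd y) (hbd t) (abs_nonneg _) zero_le_one
          _ = 1 := mul_one 1
      · simp
    have hswap := integral_integral_swap hFint
    -- right-hand side vanishes
    have hrhs : ∫ t, ∫ y, F y t ∂P ∂P = 0 := by
      have hin : ∀ t, ∫ y, F y t ∂P = g t * h t := by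
        intro t
        have hind : ∀ y, F y t = (Iic t).indicator (fun y => h y * h t) y := by
          intro y
          simp [hF, Set.indicator_apply, Set.mem_Iic]
        rw [integral_congr_ae (ae_of_all _ hind), integral_indicator measurableSet_Iic,
          integral_mul_const]
      rw [integral_congr_ae (ae_of_all _ hin)]
      have : ∀ᵐ t ∂P, g t * h t = 0 := by
        filter_upwards [hg0] with t ht
        rw [ht, zero_mul]
      rw [integral_congr_ae this, integral_zero]
    -- left-hand side
    have hw : ∀ y, ∫ t in Ici y, h t ∂P = (P {y}).toReal * h y - g y := by
      intro y
      have hcompl : (∫ t in Ici y, h t ∂P) + ∫ t in (Ici y)ᶜ, h t ∂P = ∫ t, h t ∂P :=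
        integral_add_compl measurableSet_Ici hint
      rw [compl_Ici, htot] at hcompl
      have hiosplit : g y = (∫ t in Iio y, h t ∂P) + (P {y}).toReal * h y := by
        have hu : ∫ z in Iio y ∪ {y}, h z ∂P
            = (∫ z in Iio y, h z ∂P) + ∫ z in ({y} : Set ℝ), h z ∂P :=
          setIntegral_union (by simp) (measurableSet_singleton y)
            hint.integrableOn hint.integrableOn
        rw [Iio_union_right, hsing] at hu
        exact hu
      linarith
    have hlhs : ∫ y, ∫ t, F y t ∂P ∂P
        = ∫ y, h y * ((P {y}).toReal * h y - g y) ∂P := by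
      refine integral_congr_ae (ae_of_all _ fun y => ?_)
      show ∫ t, F y t ∂P = h y * ((P {y}).toReal * h y - g y)
      have hind : ∀ t, F y t = (Ici y).indicator (fun t => h y * h t) t := by
        intro t
        simp [hF, Set.indicator_apply, Set.mem_Ici]
      rw [integral_congr_ae (ae_of_all _ hind), integral_indicator measurableSet_Ici,
        integral_const_mul, hw]
    have hzero : ∫ y, (h y) ^ 2 * (P {y}).toReal ∂P = 0 := by
      have hae2 : ∀ᵐ y ∂P, h y * ((P {y}).toReal * h y - g y) = (h y) ^ 2 * (P {y}).toReal := by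
        filter_upwards [hg0] with y hy
        rw [hy]; ring
      rw [← integral_congr_ae hae2, ← hlhs, hswap, hrhs]
    have hqint : Integrable (fun y => (h y) ^ 2 * (P {y}).toReal) P := by
      refine (integrable_const (1 : ℝ)).mono'
        (((hmeas_h.pow_const 2).mul hPsing).aestronglyMeasurable) (ae_of_all _ fun y => ?_)
      have h1 : (h y) ^ 2 ≤ 1 := by
        have := hbd y
        nlinarith [abs_nonneg (h y), sq_abs (h y)]
      have h2 : (P {y}).toReal ≤ 1 := by
        simpa using ENNReal.toReal_mono ENNReal.one_ne_top (prob_le_one (μ := P) (s := {y}))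
      have h0 : (0:ℝ) ≤ (h y) ^ 2 * (P {y}).toReal := by positivity
      rw [Real.norm_eq_abs, abs_of_nonneg h0]
      nlinarith [ENNReal.toReal_nonneg (a := P {y}), sq_nonneg (h y)]
    have hq0 : ∀ᵐ y ∂P, (h y) ^ 2 * (P {y}).toReal = 0 := by
      exact (integral_eq_zero_iff_of_nonneg (fun y => by positivity) hqint).mp hzero
    intro y
    by_cases hy : P {y} = 0
    · rw [hy]; simp
    · by_contra hne
      have hqy : (h y) ^ 2 * (P {y}).toReal ≠ 0 := by
        have hhy : h y ≠ 0 := fun h0 => hne (by rw [h0, zero_mul])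
        have : (P {y}).toReal ≠ 0 := ENNReal.toReal_ne_zero.mpr ⟨hy, measure_ne_top _ _⟩
        positivity
      have hsub : {y} ⊆ {z : ℝ | ¬ (h z) ^ 2 * (P {z}).toReal = 0} := by
        intro z hz
        rw [Set.mem_singleton_iff] at hz
        subst hz
        exact hqy
      have := measure_mono_null hsub (ae_iff.mp hq0)
      exact hy (le_antisymm (le_of_eq this) zero_le)
  -- every Iic
  have hIic : ∀ t : ℝ, ν (Iic t) = c * P (Iic t) := by
    have hgzero : ∀ t : ℝ, g t = 0 := by
      set N := toMeasurable P {y | ¬ g y = 0} with hN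
      have hNnull : P N = 0 := by
        rw [hN, measure_toMeasurable]
        exact ae_iff.mp hg0
      have hVg : ∀ y, y ∉ N → g y = 0 := by
        intro y hy
        by_contra hne
        exact hy (subset_toMeasurable _ _ hne)
      intro t
      by_cases hne : (Nᶜ ∩ Iic t).Nonempty
      · set a := sSup (Nᶜ ∩ Iic t) with ha
        have hbdd : BddAbove (Nᶜ ∩ Iic t) := ⟨t, fun x hx => hx.2⟩
        have hat : a ≤ t := csSup_le hne fun x hx => hx.2
        obtain ⟨v, hvmono, hvtend, hvmem⟩ := exists_seq_tendsto_sSup hne hbdd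
        have hva : ∀ n, v n ≤ a := fun n => le_csSup hbdd (hvmem n)
        have hvt : ∀ n, v n ≤ t := fun n => (hvmem n).2
        have hgt : ∀ n, g t = (∫ z in Ioc (v n) a, h z ∂P) + ∫ z in Ioc a t, h z ∂P := by
          intro n
          have h1 : g t = g (v n) + ∫ z in Ioc (v n) t, h z ∂P := by
            have hu : ∫ z in Iic (v n) ∪ Ioc (v n) t, h z ∂P
                = (∫ z in Iic (v n), h z ∂P) + ∫ z in Ioc (v n) t, h z ∂P :=
              setIntegral_union (Iic_disjoint_Ioc le_rfl) measurableSet_Ioc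
                hint.integrableOn hint.integrableOn
            rw [Iic_union_Ioc_eq_Iic (hvt n)] at hu
            exact hu
          have h2 : ∫ z in Ioc (v n) t, h z ∂P
              = (∫ z in Ioc (v n) a, h z ∂P) + ∫ z in Ioc a t, h z ∂P := by
            have hu : ∫ z in Ioc (v n) a ∪ Ioc a t, h z ∂P
                = (∫ z in Ioc (v n) a, h z ∂P) + ∫ z in Ioc a t, h z ∂P :=
              setIntegral_union (Ioc_disjoint_Ioc_of_le le_rfl) measurableSet_Ioc
                hint.integrableOn hint.integrableOn
            rw [Ioc_union_Ioc_eq_Ioc (hva n) hat] at hu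
            exact hu
          rw [h1, h2, hVg (v n) (hvmem n).1, zero_add]
        have hlim : Tendsto (fun n => ∫ z in Ioc (v n) a, h z ∂P) atTop (𝓝 0) := by
          set K := ⋂ n, Ioc (v n) a with hK
          have hKmeas : MeasurableSet K := MeasurableSet.iInter fun n => measurableSet_Ioc
          have hKsub : K ⊆ {a} := by
            intro y hy
            simp only [hK, mem_iInter, mem_Ioc] at hy
            have h1 : y ≤ a := (hy 0).2
            have h2 : a ≤ y := le_of_tendsto hvtend (Eventually.of_forall fun n => (hy n).1.le)
            simp [le_antisymm h1 h2]
          have hKint : ∫ z in K, h z ∂P = 0 := by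
            rcases Set.subset_singleton_iff_eq.mp hKsub with hKe | hKe
            · rw [hKe]
              simp
            · rw [hKe, hsing, mul_comm]
              exact hatom a
          have htend : Tendsto (fun n => ∫ z, (Ioc (v n) a).indicator h z ∂P) atTop
              (𝓝 (∫ z, K.indicator h z ∂P)) := by
            refine tendsto_integral_of_dominated_convergence (fun _ => (1:ℝ))
              (fun n => (hmeas_h.indicator measurableSet_Ioc).aestronglyMeasurable)
              (integrable_const 1) (fun n => ae_of_all _ fun y => ?_) (ae_of_all _ fun y => ?_)
            · rw [Set.indicator_apply]
              split_ifs
              · simpa using hbd y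
              · simp
            · by_cases hyK : y ∈ K
              · have heq : ∀ n, (Ioc (v n) a).indicator h y = K.indicator h y := by
                  intro n
                  rw [Set.indicator_of_mem hyK, Set.indicator_of_mem (mem_iInter.mp hyK n)]
                exact (funext heq : _) ▸ tendsto_const_nhds
              · obtain ⟨n0, hn0⟩ : ∃ n, y ∉ Ioc (v n) a := by
                  by_contra hcon
                  push_neg at hcon
                  exact hyK (mem_iInter.mpr hcon)
                rw [Set.indicator_of_notMem hyK]
                refine tendsto_const_nhds.congr' ?_
                filter_upwards [eventually_ge_atTop n0] with n hn
                rw [Set.indicator_of_notMem]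
                intro hmem
                exact hn0 ⟨lt_of_le_of_lt (hvmono hn) hmem.1, hmem.2⟩
          have hre : ∀ n, ∫ z, (Ioc (v n) a).indicator h z ∂P = ∫ z in Ioc (v n) a, h z ∂P :=
            fun n => integral_indicator measurableSet_Ioc
          rw [integral_indicator hKmeas, hKint] at htend
          exact htend.congr hre
        have hgt' : g t = ∫ z in Ioc a t, h z ∂P := by
          have h2 : Tendsto (fun n => (∫ z in Ioc (v n) a, h z ∂P) + ∫ z in Ioc a t, h z ∂P)
              atTop (𝓝 (0 + ∫ z in Ioc a t, h z ∂P)) := hlim.add tendsto_const_nhds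
          rw [zero_add] at h2
          exact tendsto_nhds_unique (tendsto_const_nhds.congr fun n => hgt n) h2
        rcases eq_or_lt_of_le hat with heq | hlt
        · rw [hgt', heq]
          simp
        · have hIoo : P (Ioo a t) = 0 := by
            have hsub : Ioo a t ⊆ N := by
              intro y hy
              by_contra hyN
              have hmem : y ∈ Nᶜ ∩ Iic t := ⟨hyN, le_of_lt hy.2⟩
              exact absurd (le_csSup hbdd hmem) (not_le.mpr hy.1)
            exact measure_mono_null hsub hNnull
          have hsplit : ∫ z in Ioc a t, h z ∂P
              = (∫ z in Ioo a t, h z ∂P) + ∫ z in ({t} : Set ℝ), h z ∂P := by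
            have hu : ∫ z in Ioo a t ∪ {t}, h z ∂P
                = (∫ z in Ioo a t, h z ∂P) + ∫ z in ({t} : Set ℝ), h z ∂P :=
              setIntegral_union (by simp) (measurableSet_singleton t)
                hint.integrableOn hint.integrableOn
            rw [Ioo_union_right hlt] at hu
            exact hu
          have hIoo0 : ∫ z in Ioo a t, h z ∂P = 0 := by
            rw [Measure.restrict_eq_zero.mpr hIoo, integral_zero_measure]
          rw [hgt', hsplit, hIoo0, hsing, zero_add, mul_comm]
          exact hatom t
      · have hsub : Iic t ⊆ N := by
          intro y hy
          by_contra hyN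
          exact hne ⟨y, hyN, hy⟩
        have hP0 : P (Iic t) = 0 := measure_mono_null hsub hNnull
        rw [hg]
        simp only
        rw [Measure.restrict_eq_zero.mpr hP0, integral_zero_measure]
    intro t
    have hk := key (Iic t) measurableSet_Iic
    have hgdef : g t = ∫ y in Iic t, h y ∂P := rfl
    rw [← hgdef, hgzero t] at hk
    have h0 : (ν (Iic t)).toReal = (c * P (Iic t)).toReal := by
      rw [ENNReal.toReal_mul]
      linarith
    exact (ENNReal.toReal_eq_toReal_iff' (measure_ne_top ν _)
      (ENNReal.mul_ne_top hct (measure_ne_top P _))).mp h0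
  -- extension to all Borel sets
  refine ext_of_generate_finite (Set.range Iic)
    (BorelSpace.measurable_eq.trans (borel_eq_generateFrom_Iic ℝ)) isPiSystem_Iic ?_ ?_
  · rintro s ⟨t, rfl⟩
    rw [Measure.smul_apply, smul_eq_mul]
    exact hIic t
  · rw [Measure.smul_apply, smul_eq_mul]
    exact huniv

end Aux

/-- The Cramér–von Mises dependence index
`ξ(X,Y) = (∫ Var[E[1_{Y≤t} | X]] dP_Y(t)) / (∫ Var[1_{Y≤t}] dP_Y(t))`. -/
noncomputable def cvmIndex {Ω α : Type*} [MeasurableSpace Ω] [MeasurableSpace α]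
    (μ : Measure Ω) (X : Ω → α) (Y : Ω → ℝ) : ℝ :=
  (∫ t, variance (μ[(fun ω => if Y ω ≤ t then (1 : ℝ) else 0) |
      MeasurableSpace.comap X inferInstance]) μ ∂(μ.map Y)) /
  (∫ t, variance (fun ω => if Y ω ≤ t then (1 : ℝ) else 0) μ ∂(μ.map Y))


/-- if `ξ(X,Y) = 0` then `X` and `Y` are independent. -/
theorem indepFun_of_cvmIndex_eq_zero {Ω α : Type*} [MeasurableSpace Ω] [MeasurableSpace α]
    (μ : Measure Ω) [IsProbabilityMeasure μ] (X : Ω → α) (Y : Ω → ℝ)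
    (hX : Measurable X) (hY : Measurable Y)
    (hden : 0 < ∫ t, variance (fun ω => if Y ω ≤ t then (1 : ℝ) else 0) μ ∂(μ.map Y))
    (hxi : cvmIndex μ X Y = 0) :
    IndepFun X Y μ := by
  set P := μ.map Y with hP
  haveI : IsProbabilityMeasure P := Measure.isProbabilityMeasure_map hY.aemeasurable
  have hm : MeasurableSpace.comap X inferInstance ≤ _ := hX.comap_le
  haveI : SigmaFinite (μ.trim hm) := inferInstance
  set f : ℝ → Ω → ℝ := fun t ω => if Y ω ≤ t then (1 : ℝ) else 0 with hf
  have hfmeas : ∀ t, Measurable (f t) := fun t =>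
    Measurable.ite (hY measurableSet_Iic) measurable_const measurable_const
  have hfind : ∀ t, f t = (Y ⁻¹' Set.Iic t).indicator (fun _ => (1 : ℝ)) := by
    intro t
    funext ω
    by_cases hω : Y ω ≤ t <;>
      simp [hf, Set.indicator_apply, Set.mem_preimage, Set.mem_Iic, hω]
  have hfint : ∀ t, Integrable (f t) μ := by
    intro t
    refine (integrable_const (1 : ℝ)).mono' (hfmeas t).aestronglyMeasurable
      (ae_of_all _ fun ω => ?_)
    simp only [hf]
    split_ifs <;> simp
  set F : ℝ → ℝ := fun t => (μ (Y ⁻¹' Set.Iic t)).toReal with hFdef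
  have hFint : ∀ t, ∫ ω, f t ω ∂μ = F t := by
    intro t
    rw [hfind t, integral_indicator (hY measurableSet_Iic), setIntegral_const, smul_eq_mul,
      mul_one, measureReal_def]
  set k : ℝ → Ω → ℝ := fun t => μ[f t | MeasurableSpace.comap X inferInstance] with hk
  have hk_asm : ∀ t, AEStronglyMeasurable (k t) μ := fun t =>
    (stronglyMeasurable_condExp.mono hm).aestronglyMeasurable
  have hk_nonneg : ∀ t, 0 ≤ᵐ[μ] k t := fun t =>
    condExp_nonneg (ae_of_all _ fun ω => by simp only [hf]; split_ifs <;> norm_num)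
  have hk_le_one : ∀ t, k t ≤ᵐ[μ] fun _ => (1 : ℝ) := by
    intro t
    have h1 : μ[fun _ : Ω => (1 : ℝ) | MeasurableSpace.comap X inferInstance] = fun _ => (1 : ℝ) := condExp_const hm 1
    have h2 := condExp_mono (m := MeasurableSpace.comap X inferInstance) (hfint t) (integrable_const 1)
      (ae_of_all _ fun ω => by simp only [hf]; split_ifs <;> norm_num)
    rwa [h1] at h2
  have hk_bdd : ∀ t, ∀ᵐ ω ∂μ, ‖k t ω‖ ≤ 1 := by
    intro t
    filter_upwards [hk_nonneg t, hk_le_one t] with ω h0 h1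
    rw [Real.norm_eq_abs, abs_of_nonneg h0]
    exact h1
  have hk_mem : ∀ t, MemLp (k t) 2 μ := fun t => MemLp.of_bound (hk_asm t) 1 (hk_bdd t)
  have hk_integral : ∀ t, ∫ ω, k t ω ∂μ = F t := fun t =>
    (integral_condExp hm).trans (hFint t)
  have hk2_int : ∀ t, Integrable (fun ω => (k t ω) ^ 2) μ := by
    intro t
    refine (integrable_const (1 : ℝ)).mono' ?_ ?_
    · have := (hk_asm t).mul (hk_asm t)
      have h' : (fun ω => k t ω ^ 2) = k t * k t := funext fun ω => pow_two _
      rw [h']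
      exact this
    · filter_upwards [hk_bdd t] with ω hω
      have : |k t ω| ≤ 1 := by rwa [Real.norm_eq_abs] at hω
      rw [Real.norm_eq_abs, abs_of_nonneg (sq_nonneg _)]
      nlinarith [sq_abs (k t ω), abs_nonneg (k t ω)]
  have hnum : ∫ t, variance (k t) μ ∂P = 0 := by
    have h := hxi
    rw [cvmIndex] at h
    rcases div_eq_zero_iff.mp h with h0 | h0
    · exact h0
    · exact absurd h0 (ne_of_gt hden)
  -- identify variance through moments
  have hvar_eq : ∀ t, variance (k t) μ = (∫ ω, (k t ω) ^ 2 ∂μ) - (F t) ^ 2 := by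
    intro t
    rw [variance_eq_sub (hk_mem t), hk_integral t]
    rfl
  -- monotonicity in t of the second moment
  have hfmono : ∀ s t : ℝ, s ≤ t → ∀ ω, f s ω ≤ f t ω := by
    intro s t hst ω
    simp only [hf]
    split_ifs with h1 h2
    · exact le_refl _
    · exact absurd (h1.trans hst) h2
    · exact zero_le_one
    · exact le_refl _
  have hSmono : Monotone fun t => ∫ ω, (k t ω) ^ 2 ∂μ := by
    intro s t hst
    have hmono := condExp_mono (m := MeasurableSpace.comap X inferInstance)
      (hfint s) (hfint t) (ae_of_all _ (hfmono s t hst))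
    refine integral_mono_ae (hk2_int s) (hk2_int t) ?_
    filter_upwards [hmono, hk_nonneg s] with ω h1 h2
    exact pow_le_pow_left₀ h2 h1 2
  have hFmono : Monotone F := fun s t hst =>
    ENNReal.toReal_mono (measure_ne_top _ _)
      (measure_mono (Set.preimage_mono (Set.Iic_subset_Iic.mpr hst)))
  have hvmeas : Measurable fun t => variance (k t) μ := by
    have heq : (fun t => variance (k t) μ)
        = fun t => (∫ ω, (k t ω) ^ 2 ∂μ) - (F t) ^ 2 := funext hvar_eq
    rw [heq]
    exact (hSmono.measurable).sub ((hFmono.measurable).pow_const 2)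
  have hS01 : ∀ t, 0 ≤ (∫ ω, (k t ω) ^ 2 ∂μ) ∧ (∫ ω, (k t ω) ^ 2 ∂μ) ≤ 1 := by
    intro t
    refine ⟨integral_nonneg fun ω => sq_nonneg _, ?_⟩
    have h1 : ∫ ω, (k t ω) ^ 2 ∂μ ≤ ∫ _ω, (1 : ℝ) ∂μ := by
      refine integral_mono_ae (hk2_int t) (integrable_const (1 : ℝ)) ?_
      filter_upwards [hk_bdd t] with ω hω
      have h2 : |k t ω| ≤ 1 := by rwa [Real.norm_eq_abs] at hω
      nlinarith [sq_abs (k t ω), abs_nonneg (k t ω)]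
    simpa using h1
  have hF01 : ∀ t, 0 ≤ F t ∧ F t ≤ 1 := by
    intro t
    refine ⟨ENNReal.toReal_nonneg, ?_⟩
    have hle1 : μ (Y ⁻¹' Set.Iic t) ≤ 1 := prob_le_one
    simpa using ENNReal.toReal_mono ENNReal.one_ne_top hle1
  have hvint : Integrable (fun t => variance (k t) μ) P := by
    refine (integrable_const (2 : ℝ)).mono' hvmeas.aestronglyMeasurable
      (ae_of_all _ fun t => ?_)
    obtain ⟨hS0, hS1⟩ := hS01 t
    obtain ⟨hF0, hF1⟩ := hF01 t
    rw [hvar_eq t, Real.norm_eq_abs, abs_le]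
    constructor <;> nlinarith
  have hae_var : ∀ᵐ t ∂P, variance (k t) μ = 0 :=
    (integral_eq_zero_iff_of_nonneg (fun t => variance_nonneg _ _) hvint).mp hnum
  have hae_const : ∀ᵐ t ∂P, k t =ᵐ[μ] fun _ => F t := by
    filter_upwards [hae_var] with t ht
    have hlt := (hk_mem t).evariance_lt_top
    have htr : (evariance (k t) μ).toReal = 0 := by rwa [variance] at ht
    have hevar : evariance (k t) μ = 0 := by
      rcases (ENNReal.toReal_eq_zero_iff _).mp htr with h0 | h0
      · exact h0
      · exact absurd h0 hlt.ne
    have hconst := (evariance_eq_zero_iff (hk_asm t).aemeasurable).mp hevar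
    have hki : (∫ ω, k t ω ∂μ) = F t := hk_integral t
    rw [hki] at hconst
    exact hconst
  have haeprod : ∀ᵐ t ∂P, ∀ A : Set α, MeasurableSet A →
      μ (X ⁻¹' A ∩ Y ⁻¹' Set.Iic t) = μ (X ⁻¹' A) * μ (Y ⁻¹' Set.Iic t) := by
    filter_upwards [hae_const] with t ht
    intro A hA
    have hsA : MeasurableSet[MeasurableSpace.comap X inferInstance] (X ⁻¹' A) := ⟨A, hA, rfl⟩
    have h1 : ∫ ω in X ⁻¹' A, k t ω ∂μ = ∫ ω in X ⁻¹' A, f t ω ∂μ :=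
      setIntegral_condExp hm (hfint t) hsA
    have h2 : ∫ ω in X ⁻¹' A, k t ω ∂μ = (μ (X ⁻¹' A)).toReal * F t := by
      have hres : ∀ᵐ ω ∂(μ.restrict (X ⁻¹' A)), k t ω = F t := ae_restrict_of_ae ht
      rw [integral_congr_ae hres, setIntegral_const, smul_eq_mul, measureReal_def]
    have h3 : ∫ ω in X ⁻¹' A, f t ω ∂μ = (μ (X ⁻¹' A ∩ Y ⁻¹' Set.Iic t)).toReal := by
      rw [hfind t, integral_indicator (hY measurableSet_Iic), setIntegral_const, smul_eq_mul,
        mul_one, measureReal_def, Measure.restrict_apply (hY measurableSet_Iic), Set.inter_comm]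
    have h4 : (μ (X ⁻¹' A ∩ Y ⁻¹' Set.Iic t)).toReal
        = (μ (X ⁻¹' A)).toReal * (μ (Y ⁻¹' Set.Iic t)).toReal := by
      rw [← h3, ← h1, h2, hFdef]
    rw [← ENNReal.toReal_mul] at h4
    exact (ENNReal.toReal_eq_toReal_iff' (measure_ne_top _ _)
      (ENNReal.mul_ne_top (measure_ne_top _ _) (measure_ne_top _ _))).mp h4
  -- apply the extension lemma for each measurable A
  rw [indepFun_iff_measure_inter_preimage_eq_mul]
  intro A B hA hB
  set ν : Measure ℝ := (μ.restrict (X ⁻¹' A)).map Y with hνdef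
  have hν_apply : ∀ B' : Set ℝ, MeasurableSet B' → ν B' = μ (X ⁻¹' A ∩ Y ⁻¹' B') := by
    intro B' hB'
    rw [hνdef, Measure.map_apply hY hB', Measure.restrict_apply (hY hB'), Set.inter_comm]
  haveI : IsFiniteMeasure ν := by
    constructor
    rw [hν_apply Set.univ MeasurableSet.univ]
    exact (measure_mono (Set.subset_univ _)).trans_lt (measure_lt_top μ _)
  have hle : ν ≤ P := by
    refine Measure.le_iff.mpr fun B' hB' => ?_
    rw [hν_apply B' hB', hP, Measure.map_apply hY hB']
    exact measure_mono Set.inter_subset_right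
  have hmapIic : ∀ t : ℝ, P (Set.Iic t) = μ (Y ⁻¹' Set.Iic t) := fun t => by
    rw [hP, Measure.map_apply hY measurableSet_Iic]
  have haeν : ∀ᵐ t ∂P, ν (Set.Iic t) = μ (X ⁻¹' A) * P (Set.Iic t) := by
    filter_upwards [haeprod] with t ht
    rw [hν_apply (Set.Iic t) measurableSet_Iic, hmapIic t]
    exact ht A hA
  have huniv : ν Set.univ = μ (X ⁻¹' A) * P Set.univ := by
    rw [hν_apply Set.univ MeasurableSet.univ, measure_univ, mul_one, Set.preimage_univ,
      Set.inter_univ]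
  have hext := cvm_aux hle (μ (X ⁻¹' A)) prob_le_one haeν huniv
  have := congrArg (fun m : Measure ℝ => m B) hext
  simp only [Measure.smul_apply, smul_eq_mul] at this
  rw [hν_apply B hB] at this
  rw [this, hP, Measure.map_apply hY hB]
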